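/- For every real t ≥ 1, the largest real root of h1(x) = x^3 + 4x^2 - (12t - 4)x - 16t is strictly smaller than the largest real root of g(x) = x^3 - 4(3t + 2)x - 32t. -/
import Mathlib


/-- For real `t ≥ 1`, the largest real root of `h1(x) = x^3 + 4x^2 - (12t-4)x - 16t`
is strictly smaller than the largest real root of `g(x) = x^3 - 4(3t+2)x - 32t`. -/
theorem stmt_14 (t : ℝ) (ht : 1 ≤ t) (r1 r2 : ℝ)
    (hr1 : IsGreatest {x : ℝ |
        x ^ 3 + 4 * x ^ 2 - (12 * t - 4) * x - 16 * t = 0} r1)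
    (hr2 : IsGreatest {x : ℝ | x ^ 3 - 4 * (3 * t + 2) * x - 32 * t = 0} r2) :
    r1 < r2 := by
  obtain ⟨hg2, hub2⟩ := hr2
  obtain ⟨hh1, hub1⟩ := hr1
  simp only [Set.mem_setOf_eq] at hg2 hh1
  set g : ℝ → ℝ := fun x => x ^ 3 - 4 * (3 * t + 2) * x - 32 * t with hgdef
  have hcont : ContinuousOn g (Set.univ : Set ℝ) := by
    apply Continuous.continuousOn; fun_prop
  -- Step 1: r2 > 0, via IVT on [0, 44t+8]
  have hr2pos : 0 < r2 := by
    have hM : g (44 * t + 8) ≥ 0 := by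
      simp only [hgdef]; nlinarith [sq_nonneg t, sq_nonneg (t - 1)]
    have h0 : g 0 ≤ 0 := by simp only [hgdef]; nlinarith
    have hle : (0 : ℝ) ≤ 44 * t + 8 := by linarith
    obtain ⟨x0, hx0mem, hx0⟩ := intermediate_value_Icc hle (hcont.mono (Set.subset_univ _))
      (Set.mem_Icc.mpr ⟨h0, hM⟩)
    have hx0r2 : x0 ≤ r2 := hub2 (by simpa using hx0)
    have : r2 ≠ 0 := by
      intro h; rw [h] at hg2; nlinarith
    rcases lt_or_eq_of_le (le_trans hx0mem.1 hx0r2) with h | h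
    · exact h
    · exact absurd h.symm this
  -- Step 2: contradiction if r2 ≤ r1
  by_contra hcon
  push_neg at hcon
  have hr1pos : 0 < r1 := lt_of_lt_of_le hr2pos hcon
  have hgr1 : g r1 < 0 := by
    simp only [hgdef]; nlinarith
  set M : ℝ := r1 + 44 * t + 8 with hMdef
  have hMge : g M ≥ 0 := by
    simp only [hgdef, hMdef]
    nlinarith [sq_nonneg r1, sq_nonneg t, mul_pos hr1pos hr1pos,
      mul_pos (mul_pos hr1pos hr1pos) hr1pos, sq_nonneg (t - 1),
      mul_pos hr1pos (show (0:ℝ) < t by linarith)]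
  have hle : r1 ≤ M := by simp only [hMdef]; linarith
  obtain ⟨x1, hx1mem, hx1⟩ := intermediate_value_Icc hle (hcont.mono (Set.subset_univ _))
    (Set.mem_Icc.mpr ⟨le_of_lt hgr1, hMge⟩)
  have hx1le : x1 ≤ r2 := hub2 (by simpa using hx1)
  have : x1 = r1 := le_antisymm (le_trans hx1le hcon) hx1mem.1
  rw [this] at hx1
  exact absurd hx1 (ne_of_lt hgr1)
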